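/- The random variable t^{−1−1/α} ∫_t^{U(t)} Y₀(s) ds converges to 0 in probability as t → 0⁺; that is, for every η > 0, lim_{t → 0⁺} ℙ(|∫_t^{U(t)} Y₀(s) ds| ≥ η t^{1+1/α}) = 0. -/

import Mathlib

open MeasureTheory ProbabilityTheory Filter Set Topology

noncomputable section

/-- A function on `[0,∞)` is càdlàg: right-continuous at every `t ≥ 0`, with left
limits at every `t > 0`. -/
def CadlagOn (f : ℝ → ℝ) : Prop :=
  (∀ t : ℝ, 0 ≤ t → Filter.Tendsto f (𝓝[Set.Ici t] t) (𝓝 (f t))) ∧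
  (∀ t : ℝ, 0 < t → ∃ l : ℝ, Filter.Tendsto f (𝓝[Set.Ico 0 t] t) (𝓝 l))

/-- `T = inf {s ≥ 0 : Y s ≤ 0}`, the first hitting time of `(-∞, 0]` by `Y`. -/
def Tstop {Ω : Type*} (Y : ℝ → Ω → ℝ) (ω : Ω) : ℝ :=
  sInf {s : ℝ | 0 ≤ s ∧ Y s ω ≤ 0}

/-- `U t = inf {s ≥ 0 : ∫₀ˢ du / Y(u ∧ T) ≥ t}`, the Lamperti time change. -/
def Uproc {Ω : Type*} (Y : ℝ → Ω → ℝ) (t : ℝ) (ω : Ω) : ℝ :=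
  sInf {s : ℝ | 0 ≤ s ∧ t ≤ ∫ u in (0:ℝ)..s, (Y (min u (Tstop Y ω)) ω)⁻¹}

/-- The constant `C_α = α (α-1) Γ(α)`. -/
def Calpha (α : ℝ) : ℝ := α * (α - 1) * Real.Gamma α

/-- `R t = C_α ∫₀^{U t} Y(u)^{-α} du`. -/
def Rproc {Ω : Type*} (α : ℝ) (Y : ℝ → Ω → ℝ) (t : ℝ) (ω : Ω) : ℝ :=
  Calpha α * ∫ u in (0:ℝ)..(Uproc Y t ω), (Y u ω) ^ (-α)

/-- `R⁻¹ t = inf {s ≥ 0 : R s ≥ t}`, the right-continuous inverse of `R`. -/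
def Rinv {Ω : Type*} (α : ℝ) (Y : ℝ → Ω → ℝ) (t : ℝ) (ω : Ω) : ℝ :=
  sInf {s : ℝ | 0 ≤ s ∧ t ≤ Rproc α Y s ω}

/-- The event `A_{t,ε} = {|Y(s) - 1| ≤ ε for all s ∈ [0, 2t]}`. -/
def Aevent {Ω : Type*} (Y : ℝ → Ω → ℝ) (t ε : ℝ) : Set Ω :=
  {ω | ∀ s ∈ Set.Icc (0:ℝ) (2*t), |Y s ω - 1| ≤ ε}

lemma key {Ω : Type*} (Y : ℝ → Ω → ℝ) (ω : Ω)
    (hYm : Measurable (fun s => Y s ω))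
    (t ε : ℝ) (ht : 0 < t) (hε0 : 0 < ε) (hε1 : ε < 1)
    (hA : ∀ s ∈ Set.Icc (0:ℝ) (2*t), |Y s ω - 1| ≤ ε) :
    |∫ s in t..(Uproc Y t ω), (Y s ω - 1)| ≤ ε * (ε * t) := by
  set T := Tstop Y ω with hT
  have hT0 : 0 ≤ T := Real.sInf_nonneg (fun s hs => hs.1)
  set g : ℝ → ℝ := fun u => (Y (min u T) ω)⁻¹ with hg
  have hgm : Measurable g := (hYm.comp (measurable_id.min measurable_const)).inv
  have hYb : ∀ u ∈ Set.Icc (0:ℝ) (2*t), 1 - ε ≤ Y (min u T) ω ∧ Y (min u T) ω ≤ 1 + ε := by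
    intro u hu
    have hmem : min u T ∈ Set.Icc (0:ℝ) (2*t) :=
      ⟨le_min hu.1 hT0, (min_le_left _ _).trans hu.2⟩
    have := abs_le.1 (hA _ hmem)
    constructor <;> linarith [this.1, this.2]
  have h1ε : (0:ℝ) < 1 - ε := by linarith
  have h1ε' : (0:ℝ) < 1 + ε := by linarith
  have hgb : ∀ u ∈ Set.Icc (0:ℝ) (2*t), (1+ε)⁻¹ ≤ g u ∧ g u ≤ (1-ε)⁻¹ := by
    intro u hu
    obtain ⟨h1, h2⟩ := hYb u hu
    have hYpos : 0 < Y (min u T) ω := lt_of_lt_of_le h1ε h1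
    exact ⟨inv_anti₀ hYpos h2, le_trans (by
      exact (inv_anti₀ h1ε h1)) le_rfl⟩
  -- integrability on [0, 2t]
  have hInt : IntervalIntegrable g volume 0 (2*t) := by
    rw [intervalIntegrable_iff_integrableOn_Icc_of_le (by linarith)]
    refine Integrable.mono' (integrable_const ((1-ε)⁻¹)) hgm.aestronglyMeasurable.restrict ?_
    filter_upwards [ae_restrict_mem measurableSet_Icc] with u hu
    rw [Real.norm_eq_abs, abs_of_nonneg (le_trans (by positivity) (hgb u hu).1)]
    exact (hgb u hu).2
  have hIntsub : ∀ a b : ℝ, 0 ≤ a → a ≤ b → b ≤ 2*t → IntervalIntegrable g volume a b := by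
    intro a b ha hab hb
    refine hInt.mono_set ?_
    rw [Set.uIcc_of_le hab, Set.uIcc_of_le (by linarith : (0:ℝ) ≤ 2*t)]
    exact Set.Icc_subset_Icc ha hb
  set S := {s : ℝ | 0 ≤ s ∧ t ≤ ∫ u in (0:ℝ)..s, g u} with hS
  have hUS : Uproc Y t ω = sInf S := rfl
  -- t*(1+ε) ∈ S
  have hb1 : t * (1+ε) ≤ 2*t := by nlinarith
  have hmemS : t * (1+ε) ∈ S := by
    refine ⟨by positivity, ?_⟩
    have hcomp : (∫ u in (0:ℝ)..(t*(1+ε)), (1+ε)⁻¹) ≤ ∫ u in (0:ℝ)..(t*(1+ε)), g u := by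
      refine intervalIntegral.integral_mono_on (by positivity) (intervalIntegrable_const)
        (hIntsub 0 _ le_rfl (by positivity) hb1) ?_
      intro x hx
      exact (hgb x (Set.Icc_subset_Icc le_rfl hb1 hx)).1
    rw [intervalIntegral.integral_const, smul_eq_mul, sub_zero] at hcomp
    calc t = t * (1+ε) * (1+ε)⁻¹ := by field_simp
    _ ≤ _ := hcomp
  have hbdd : BddBelow S := ⟨0, fun s hs => hs.1⟩
  have hU_le : Uproc Y t ω ≤ t * (1+ε) := csInf_le hbdd hmemS
  have hU_ge : t * (1-ε) ≤ Uproc Y t ω := by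
    rw [hUS]
    refine le_csInf ⟨_, hmemS⟩ ?_
    intro s hs
    by_contra hlt
    push_neg at hlt
    have hs2t : s ≤ 2*t := by nlinarith
    have hcomp : (∫ u in (0:ℝ)..s, g u) ≤ ∫ u in (0:ℝ)..s, (1-ε)⁻¹ := by
      refine intervalIntegral.integral_mono_on hs.1
        (hIntsub 0 s le_rfl hs.1 hs2t) intervalIntegrable_const ?_
      intro x hx
      exact (hgb x (Set.Icc_subset_Icc le_rfl hs2t hx)).2
    rw [intervalIntegral.integral_const, smul_eq_mul, sub_zero] at hcomp
    have : s * (1-ε)⁻¹ < t := by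
      have := mul_lt_mul_of_pos_right hlt (inv_pos.2 h1ε)
      calc s * (1-ε)⁻¹ < t * (1-ε) * (1-ε)⁻¹ := this
      _ = t := by field_simp
    linarith [hs.2]
  set U := Uproc Y t ω
  have hU0 : 0 ≤ U := le_trans (by positivity) hU_ge
  have hsub : Set.uIoc t U ⊆ Set.Icc (0:ℝ) (2*t) := by
    intro x hx
    rcases Set.uIoc_subset_uIcc hx with hx'
    rw [Set.uIcc] at hx'
    constructor
    · exact le_trans (le_min (by positivity) hU0) hx'.1
    · exact le_trans hx'.2 (max_le (by linarith) (by linarith))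
  have hnorm : ‖∫ s in t..U, (Y s ω - 1)‖ ≤ ε * |U - t| :=
    intervalIntegral.norm_integral_le_of_norm_le_const
      (fun x hx => by rw [Real.norm_eq_abs]; exact hA x (hsub hx))
  rw [Real.norm_eq_abs] at hnorm
  have habs : |U - t| ≤ ε * t := by
    rw [abs_sub_le_iff]
    constructor <;> nlinarith
  calc |∫ s in t..U, (Y s ω - 1)| ≤ ε * |U - t| := hnorm
  _ ≤ ε * (ε * t) := by nlinarith [abs_nonneg (U - t)]

/-- `t^(-1-1/α) ∫_t^{U(t)} Y₀(s) ds` converges to `0` in probability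
as `t → 0⁺`. -/
theorem remainder_integral_vanishes_in_probability
    {Ω : Type*} [MeasureSpace Ω] [IsProbabilityMeasure (ℙ : Measure Ω)]
    (α : ℝ) (hα : α ∈ Set.Ioo (1:ℝ) 2)
    (Y : ℝ → Ω → ℝ)
    (hmeas : Measurable (Function.uncurry Y))
    (hstart : ∀ᵐ ω ∂ℙ, Y 0 ω = 1)
    (hpath : ∀ᵐ ω ∂ℙ, CadlagOn (fun t => Y t ω))
    (hscale : ∀ c : ℝ, 0 < c →
      Measure.map (fun ω => fun t : Set.Ici (0:ℝ) => Y (t : ℝ) ω - 1) ℙ =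
      Measure.map (fun ω => fun t : Set.Ici (0:ℝ) => c ^ (α⁻¹) * (Y ((t : ℝ) / c) ω - 1)) ℙ)
    (hsmall : ∃ C : ℝ, 0 < C ∧ ∀ t : ℝ, 0 < t → ∀ ε ∈ Set.Ioo (0:ℝ) 1,
      ℙ {ω | ∃ s ∈ Set.Icc (0:ℝ) (2*t), ε < |Y s ω - 1|} ≤ ENNReal.ofReal (C * t * ε ^ (-α)))
    : ∀ η : ℝ, 0 < η →
      Tendsto (fun t : ℝ => ℙ {ω |
          η * t ^ (1 + 1/α) ≤ |∫ s in t..(Uproc Y t ω), (Y s ω - 1)|})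
        (𝓝[>] 0) (𝓝 0) := by
  intro η hη
  obtain ⟨C, hC, hbound⟩ := hsmall
  have hα0 : (0:ℝ) < α := lt_trans one_pos hα.1
  set εf : ℝ → ℝ := fun t => min (1/2) (Real.sqrt (η * t ^ (α⁻¹)) / 2) with hεf
  -- eventual bound by ofReal (C * t * εf t ^ (-α))
  have hev : ∀ᶠ t : ℝ in 𝓝[>] 0,
      ℙ {ω | η * t ^ (1 + 1/α) ≤ |∫ s in t..(Uproc Y t ω), (Y s ω - 1)|}
        ≤ ENNReal.ofReal (C * t * (εf t) ^ (-α)) := by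
    filter_upwards [self_mem_nhdsWithin] with t ht
    rw [Set.mem_Ioi] at ht
    have hx : 0 < η * t ^ (α⁻¹) := by positivity
    have hε0 : 0 < εf t := lt_min (by norm_num) (by positivity)
    have hε1 : εf t < 1 := lt_of_le_of_lt (min_le_left _ _) (by norm_num)
    have hsubset : {ω : Ω | η * t ^ (1 + 1/α) ≤ |∫ s in t..(Uproc Y t ω), (Y s ω - 1)|}
        ⊆ {ω : Ω | ∃ s ∈ Set.Icc (0:ℝ) (2*t), εf t < |Y s ω - 1|} := by
      intro ω hω
      by_contra hnot
      simp only [Set.mem_setOf_eq, not_exists] at hnot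
      push_neg at hnot
      have hA : ∀ s ∈ Set.Icc (0:ℝ) (2*t), |Y s ω - 1| ≤ εf t := hnot
      have hYm : Measurable (fun s => Y s ω) :=
        hmeas.comp (measurable_id.prodMk measurable_const)
      have hkey := key Y ω hYm t (εf t) ht hε0 hε1 hA
      have hsq : εf t * (εf t * t) < η * t ^ (1 + 1/α) := by
        have h1 : εf t ≤ Real.sqrt (η * t ^ (α⁻¹)) / 2 := min_le_right _ _
        have h2 : εf t * εf t ≤ (η * t ^ (α⁻¹)) / 4 := by
          have := mul_le_mul h1 h1 hε0.le (by positivity)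
          calc εf t * εf t ≤ Real.sqrt (η * t ^ (α⁻¹)) / 2 * (Real.sqrt (η * t ^ (α⁻¹)) / 2) := this
          _ = Real.sqrt (η * t ^ (α⁻¹)) * Real.sqrt (η * t ^ (α⁻¹)) / 4 := by ring
          _ = (η * t ^ (α⁻¹)) / 4 := by rw [Real.mul_self_sqrt hx.le]
        have h3 : t ^ (1 + 1/α) = t * t ^ (α⁻¹) := by
          rw [Real.rpow_add ht, Real.rpow_one, one_div]
        rw [h3]
        nlinarith
      rw [Set.mem_setOf_eq] at hω
      linarith
    exact le_trans (measure_mono hsubset) (hbound t ht (εf t) ⟨hε0, hε1⟩)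
  -- the real-valued bound tends to zero
  have hx0 : Tendsto (fun t : ℝ => η * t ^ (α⁻¹)) (𝓝[>] 0) (𝓝 0) := by
    have hc : ContinuousAt (fun t : ℝ => t ^ (α⁻¹)) 0 :=
      Real.continuousAt_rpow_const 0 (α⁻¹) (Or.inr (by positivity))
    have h0 : Tendsto (fun t : ℝ => t ^ (α⁻¹)) (𝓝[>] (0:ℝ)) (𝓝 ((0:ℝ) ^ (α⁻¹))) :=
      hc.tendsto.mono_left nhdsWithin_le_nhds
    rw [Real.zero_rpow (by positivity)] at h0
    simpa using h0.const_mul η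
  have hevsmall : ∀ᶠ t : ℝ in 𝓝[>] 0, η * t ^ (α⁻¹) ≤ 1 :=
    hx0.eventually_le_const (by norm_num)
  set K : ℝ := C * (η ^ (-(α/2))) / (2:ℝ) ^ (-α) with hK
  have heq : ∀ᶠ t : ℝ in 𝓝[>] 0, K * t ^ ((1:ℝ)/2) = C * t * (εf t) ^ (-α) := by
    filter_upwards [self_mem_nhdsWithin, hevsmall] with t ht hsm
    rw [Set.mem_Ioi] at ht
    have hx : 0 < η * t ^ (α⁻¹) := by positivity
    have hsqrt1 : Real.sqrt (η * t ^ (α⁻¹)) ≤ 1 := by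
      rw [show (1:ℝ) = Real.sqrt 1 by simp]
      exact Real.sqrt_le_sqrt hsm
    have hmin : εf t = Real.sqrt (η * t ^ (α⁻¹)) / 2 :=
      min_eq_right (by linarith)
    rw [hmin, Real.sqrt_eq_rpow,
      Real.div_rpow (Real.rpow_nonneg hx.le _) (by norm_num),
      ← Real.rpow_mul hx.le, Real.mul_rpow hη.le (Real.rpow_nonneg ht.le _),
      ← Real.rpow_mul ht.le]
    have e2 : α⁻¹ * (1/2*(-α)) = -(1/2) := by field_simp
    have e1 : (1:ℝ)/2*(-α) = -(α/2) := by ring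
    rw [e2, e1]
    have e3 : t * t ^ (-((1:ℝ)/2)) = t ^ ((1:ℝ)/2) := by
      rw [show ((1:ℝ)/2) = 1 + -(1/2) by norm_num, Real.rpow_add ht, Real.rpow_one]
      norm_num
    rw [← e3, hK]
    ring
  have hreal : Tendsto (fun t : ℝ => C * t * (εf t) ^ (-α)) (𝓝[>] 0) (𝓝 0) := by
    have hK0 : Tendsto (fun t : ℝ => K * t ^ ((1:ℝ)/2)) (𝓝[>] 0) (𝓝 0) := by
      have hc : ContinuousAt (fun t : ℝ => t ^ ((1:ℝ)/2)) 0 :=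
        Real.continuousAt_rpow_const 0 _ (Or.inr (by norm_num))
      have h0 := (hc.tendsto.mono_left (nhdsWithin_le_nhds (s := Set.Ioi (0:ℝ)))).const_mul K
      rw [Real.zero_rpow (by norm_num), mul_zero] at h0
      exact h0
    exact hK0.congr' heq
  have htend : Tendsto (fun t : ℝ => ENNReal.ofReal (C * t * (εf t) ^ (-α))) (𝓝[>] 0) (𝓝 0) := by
    have := ENNReal.tendsto_ofReal hreal
    rwa [ENNReal.ofReal_zero] at this
  exact tendsto_of_tendsto_of_tendsto_of_le_of_le' tendsto_const_nhds htend
    (Eventually.of_forall (fun t => zero_le)) hev
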